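/- Assume q + q⁻¹ ≠ 0 in K. The matrices P⁺_q = (q+q⁻¹)⁻¹·(q·I_{n²} − S) and P⁻_q = (q+q⁻¹)⁻¹·(q⁻¹·I_{n²} + S) are two orthogonal idempotents summing to the identity: (P⁺_q)² = P⁺_q, (P⁻_q)² = P⁻_q, P⁺_q·P⁻_q = P⁻_q·P⁺_q = 0, and P⁺_q + P⁻_q = I_{n²}. -/

import Mathlib

open Matrix Kronecker

/-- The Hecke matrix `S = q·Σᵢ E_{ii}⊗E_{ii} + Σ_{i≠j} E_{ij}⊗E_{ji} + (q−q⁻¹)·Σ_{i<j} E_{ii}⊗E_{jj}`. -/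
noncomputable def heckeS (K : Type*) [Field K] (n : ℕ) (q : K) :
    Matrix (Fin n × Fin n) (Fin n × Fin n) K :=
  q • (∑ i : Fin n, single i i (1 : K) ⊗ₖ single i i (1 : K))
    + ∑ i : Fin n, ∑ j : Fin n,
        (if i ≠ j then single i j (1 : K) ⊗ₖ single j i (1 : K) else 0)
    + (q - q⁻¹) • ∑ i : Fin n, ∑ j : Fin n,
        (if i < j then single i i (1 : K) ⊗ₖ single j j (1 : K) else 0)


section Aux
variable {K : Type*} [Field K] {n : ℕ}


lemma sum1_apply (a b c d : Fin n) :
    (∑ i : Fin n, single i i (1 : K) ⊗ₖ single i i (1 : K)) (a,b) (c,d)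
      = if a = b ∧ c = a ∧ d = a then 1 else 0 := by
  simp only [Matrix.sum_apply, kroneckerMap_apply, Matrix.single, Matrix.of_apply]
  rw [Finset.sum_eq_single a]
  · by_cases h1 : a = b <;> by_cases h2 : c = a <;> by_cases h3 : d = a <;>
      simp_all [eq_comm]
  · intro i _ hi; simp [hi, Ne.symm hi]
  · simp

lemma sum2_apply (a b c d : Fin n) :
    (∑ i : Fin n, ∑ j : Fin n,
        (if i ≠ j then single i j (1 : K) ⊗ₖ single j i (1 : K) else 0)) (a,b) (c,d)
      = if a ≠ b ∧ c = b ∧ d = a then 1 else 0 := by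
  simp only [Matrix.sum_apply, apply_ite (fun M : Matrix (Fin n × Fin n) (Fin n × Fin n) K => M (a,b) (c,d)),
    kroneckerMap_apply, Matrix.single, Matrix.of_apply, Matrix.zero_apply]
  rw [Finset.sum_eq_single a]
  · rw [Finset.sum_eq_single b]
    · by_cases h1 : a = b <;> by_cases h2 : c = b <;> by_cases h3 : d = a <;>
        simp_all [eq_comm]
    · intro j _ hj; by_cases h : a = j <;> simp [hj, Ne.symm hj, h]
    · simp
  · intro i _ hi; apply Finset.sum_eq_zero; intro j _
    by_cases h : i = j <;> simp [hi, Ne.symm hi, h]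
  · simp

lemma sum3_apply (a b c d : Fin n) :
    (∑ i : Fin n, ∑ j : Fin n,
        (if i < j then single i i (1 : K) ⊗ₖ single j j (1 : K) else 0)) (a,b) (c,d)
      = if a < b ∧ c = a ∧ d = b then 1 else 0 := by
  simp only [Matrix.sum_apply, apply_ite (fun M : Matrix (Fin n × Fin n) (Fin n × Fin n) K => M (a,b) (c,d)),
    kroneckerMap_apply, Matrix.single, Matrix.of_apply, Matrix.zero_apply]
  rw [Finset.sum_eq_single a]
  · rw [Finset.sum_eq_single b]
    · by_cases h1 : a < b <;> by_cases h2 : c = a <;> by_cases h3 : d = b <;>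
        simp_all [eq_comm]
    · intro j _ hj; by_cases h : a < j <;> simp [hj, Ne.symm hj, h]
    · simp
  · intro i _ hi; apply Finset.sum_eq_zero; intro j _
    by_cases h : i < j <;> simp [hi, Ne.symm hi, h]
  · simp

lemma heckeS_apply (q : K) (a b : Fin n) (p : Fin n × Fin n) :
    heckeS K n q (a,b) p =
      (if p = (b,a) then (if a = b then q else 1) else 0)
      + (if p = (a,b) then (if a < b then q - q⁻¹ else 0) else 0) := by
  obtain ⟨c,d⟩ := p
  simp only [heckeS, Matrix.add_apply, Matrix.smul_apply, sum1_apply, sum2_apply, sum3_apply,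
    smul_eq_mul, Prod.mk.injEq]
  by_cases h1 : a = b <;> by_cases h2 : c = b <;> by_cases h3 : d = a <;>
    by_cases h4 : c = a <;> by_cases h5 : d = b <;>
    simp_all [lt_irrefl] <;>
  rcases lt_trichotomy a b with h | h | h <;> simp_all [le_of_lt, not_lt_of_gt]


lemma heckeS_sq (q : K) (hq : q ≠ 0) :
    heckeS K n q * heckeS K n q = (q - q⁻¹) • heckeS K n q + 1 := by
  ext ⟨a,b⟩ ⟨c,d⟩
  rw [Matrix.mul_apply]
  simp only [heckeS_apply, add_mul, ite_mul, zero_mul, Finset.sum_add_distrib,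
    Finset.sum_ite_eq', Finset.sum_ite_eq, Finset.mem_univ, if_true, Matrix.add_apply, Matrix.smul_apply,
    Matrix.one_apply, smul_eq_mul]
  simp only [heckeS_apply, Prod.mk.injEq]
  rcases lt_trichotomy a b with h | h | h
  · have hne : a ≠ b := ne_of_lt h
    have hnlt : ¬ b < a := not_lt_of_gt h
    by_cases h2 : c = a <;> by_cases h3 : d = b <;> by_cases h4 : c = b <;> by_cases h5 : d = a <;>
      simp_all [eq_comm] <;> first | (field_simp; ring1) | ring1 | (rw [if_neg (asymm h)])
  · subst h
    by_cases h2 : c = a <;> by_cases h3 : d = a <;> simp_all [eq_comm, lt_irrefl] <;> field_simp <;> ring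
  · have hne : a ≠ b := (ne_of_lt h).symm
    have hnlt : ¬ a < b := not_lt_of_gt h
    by_cases h2 : c = a <;> by_cases h3 : d = b <;> by_cases h4 : c = b <;> by_cases h5 : d = a <;>
      simp_all [eq_comm] <;> first | (field_simp; ring1) | ring1 | (rw [if_neg (asymm h)])

end Aux

/-- `P⁺_q = (q+q⁻¹)⁻¹·(q·I − S)`. -/
noncomputable def Pplus (K : Type*) [Field K] (n : ℕ) (q : K) :
    Matrix (Fin n × Fin n) (Fin n × Fin n) K :=
  (q + q⁻¹)⁻¹ • (q • (1 : Matrix (Fin n × Fin n) (Fin n × Fin n) K) - heckeS K n q)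

/-- `P⁻_q = (q+q⁻¹)⁻¹·(q⁻¹·I + S)`. -/
noncomputable def Pminus (K : Type*) [Field K] (n : ℕ) (q : K) :
    Matrix (Fin n × Fin n) (Fin n × Fin n) K :=
  (q + q⁻¹)⁻¹ • (q⁻¹ • (1 : Matrix (Fin n × Fin n) (Fin n × Fin n) K) + heckeS K n q)

/-- `P⁺_q` and `P⁻_q` are orthogonal idempotents summing to the identity. -/
theorem Pq_orthogonal_idempotents (K : Type*) [Field K] (n : ℕ) (hn : 1 ≤ n)
    (q : K) (hq : q ≠ 0) (h2q : q + q⁻¹ ≠ 0) :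
    Pplus K n q * Pplus K n q = Pplus K n q ∧
    Pminus K n q * Pminus K n q = Pminus K n q ∧
    Pplus K n q * Pminus K n q = 0 ∧
    Pminus K n q * Pplus K n q = 0 ∧
    Pplus K n q + Pminus K n q = 1 := by
  have hS : heckeS K n q * heckeS K n q = (q - q⁻¹) • heckeS K n q + 1 := heckeS_sq q hq
  have hcc : (q + q⁻¹)⁻¹ * (q + q⁻¹) = 1 := inv_mul_cancel₀ h2q
  have hAA : (q • (1 : Matrix (Fin n × Fin n) (Fin n × Fin n) K) - heckeS K n q) *
      (q • 1 - heckeS K n q) = (q + q⁻¹) • (q • 1 - heckeS K n q) := by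
    simp only [sub_mul, mul_sub, add_mul, mul_add, Matrix.smul_mul, Matrix.mul_smul,
      Matrix.mul_one, Matrix.one_mul, hS, smul_add, smul_sub, smul_smul]
    match_scalars <;> field_simp <;> ring
  have hBB : (q⁻¹ • (1 : Matrix (Fin n × Fin n) (Fin n × Fin n) K) + heckeS K n q) *
      (q⁻¹ • 1 + heckeS K n q) = (q + q⁻¹) • (q⁻¹ • 1 + heckeS K n q) := by
    simp only [sub_mul, mul_sub, add_mul, mul_add, Matrix.smul_mul, Matrix.mul_smul,
      Matrix.mul_one, Matrix.one_mul, hS, smul_add, smul_sub, smul_smul]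
    match_scalars <;> field_simp <;> ring
  have hAB : (q • (1 : Matrix (Fin n × Fin n) (Fin n × Fin n) K) - heckeS K n q) *
      (q⁻¹ • 1 + heckeS K n q) = 0 := by
    simp only [sub_mul, mul_sub, add_mul, mul_add, Matrix.smul_mul, Matrix.mul_smul,
      Matrix.mul_one, Matrix.one_mul, hS, smul_add, smul_sub, smul_smul]
    match_scalars <;> field_simp <;> ring
  have hBA : (q⁻¹ • (1 : Matrix (Fin n × Fin n) (Fin n × Fin n) K) + heckeS K n q) *
      (q • 1 - heckeS K n q) = 0 := by
    simp only [sub_mul, mul_sub, add_mul, mul_add, Matrix.smul_mul, Matrix.mul_smul,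
      Matrix.mul_one, Matrix.one_mul, hS, smul_add, smul_sub, smul_smul]
    match_scalars <;> field_simp <;> ring
  refine ⟨?_, ?_, ?_, ?_, ?_⟩
  · rw [Pplus, Matrix.smul_mul, Matrix.mul_smul, hAA, smul_smul, smul_smul, mul_assoc, hcc,
      mul_one]
  · rw [Pminus, Matrix.smul_mul, Matrix.mul_smul, hBB, smul_smul, smul_smul, mul_assoc, hcc,
      mul_one]
  · rw [Pplus, Pminus, Matrix.smul_mul, Matrix.mul_smul, hAB, smul_zero, smul_zero]
  · rw [Pplus, Pminus, Matrix.smul_mul, Matrix.mul_smul, hBA, smul_zero, smul_zero]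
  · rw [Pplus, Pminus, ← smul_add]
    have h5 : q • (1 : Matrix (Fin n × Fin n) (Fin n × Fin n) K) - heckeS K n q +
        (q⁻¹ • 1 + heckeS K n q) = (q + q⁻¹) • 1 := by
      match_scalars <;> ring
    rw [h5, smul_smul, hcc, one_smul]
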